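/- arXiv:2003.11568 — 3 statements merged into one kernel-verified Lean document; each statement's English description precedes it below -/
import Mathlib

section
/- Let m ≥ 2, P^m = [[P^{m-1}, α], [αᵀ, β]] a symmetric m×m binary matrix in block form, b^m = (b^{m-1}, b_m), and let c^m, c^{m-1} be the corresponding second-order Reed–Muller sequences of lengths 2^m and 2^{m-1}. Then for all 1 ≤ j ≤ 2^{m-1}: c^m_{2j} = v_j · c^{m-1}_j, where v_j = i^{2 b_m + β + 2 αᵀ a_{j-1}^{m-1}} (exponent computed in ℤ via {0,1}-lifts), and in particular v_j = (-1)^{b_m + αᵀ a_{j-1}^{m-1}} · i^{β}. -/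
open Complex Finset

/-- The `m`-bit binary expansion of `n`, as a vector over ℤ/2,
with the least significant bit as the last coordinate. -/
def binExp (m n : ℕ) : Fin m → ZMod 2 :=
  fun k => if Nat.testBit n (m - 1 - (k : ℕ)) then 1 else 0

/-- Inner product over ℤ/2, lifted to a natural number in {0,1}. -/
def ip {m : ℕ} (u v : Fin m → ZMod 2) : ℕ := (∑ k, u k * v k).val

/-- The second-order Reed–Muller sequence determined by `(P, b)`,
with 0-based index `n` (so the paper's `c_j` is `rmSeq P b (j-1)`). -/
noncomputable def rmSeq {m : ℕ} (P : Matrix (Fin m) (Fin m) (ZMod 2))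
    (b : Fin m → ZMod 2) (n : ℕ) : ℂ :=
  Complex.I ^ (2 * ∑ k, (b k).val * (binExp m n k).val
    + ∑ k, ∑ l, (binExp m n k).val * (P k l).val * (binExp m n l).val)

lemma Ipow_mod4 (a c : ℕ) (h : a % 4 = c % 4) : Complex.I ^ a = Complex.I ^ c := by
  rw [← Nat.div_add_mod a 4, ← Nat.div_add_mod c 4, h]
  simp [pow_add, pow_mul, Complex.I_pow_four]

/-- The paper's `m` is `m + 1` here. The paper's entry `c^m_{2j}` is `rmSeq P b (2*j-1)`
and `c^{m-1}_j` is `rmSeq Q b' (j-1)`. -/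
theorem stmt3 (m : ℕ) (hm : 1 ≤ m)
    (P : Matrix (Fin (m + 1)) (Fin (m + 1)) (ZMod 2)) (hP : P.IsSymm)
    (Q : Matrix (Fin m) (Fin m) (ZMod 2)) (α : Fin m → ZMod 2) (β : ZMod 2)
    (hQ : ∀ k l : Fin m, P (Fin.castSucc k) (Fin.castSucc l) = Q k l)
    (hα : ∀ k : Fin m, P (Fin.castSucc k) (Fin.last m) = α k)
    (hβ : P (Fin.last m) (Fin.last m) = β)
    (b : Fin (m + 1) → ZMod 2) (b' : Fin m → ZMod 2) (bm : ZMod 2)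
    (hb : ∀ k : Fin m, b (Fin.castSucc k) = b' k) (hbm : b (Fin.last m) = bm)
    (j : ℕ) (hj1 : 1 ≤ j) (hj2 : j ≤ 2 ^ m) :
    rmSeq P b (2 * j - 1)
      = Complex.I ^ (2 * bm.val + β.val + 2 * ip α (binExp m (j - 1)))
          * rmSeq Q b' (j - 1) ∧
    Complex.I ^ (2 * bm.val + β.val + 2 * ip α (binExp m (j - 1)))
      = (-1 : ℂ) ^ (bm.val + ip α (binExp m (j - 1))) * Complex.I ^ β.val := by
  have hα' : ∀ l : Fin m, P (Fin.last m) (Fin.castSucc l) = α l := by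
    intro l; rw [← hα l, ← hP.apply]
  have h2j : 2 * j - 1 = 2 * (j - 1) + 1 := by omega
  have hA1 : ∀ k : Fin m, binExp (m+1) (2*j-1) (Fin.castSucc k) = binExp m (j-1) k := by
    intro k
    simp only [binExp, h2j, Fin.coe_castSucc]
    have h1 : m + 1 - 1 - (k : ℕ) = (m - 1 - (k : ℕ)) + 1 := by omega
    have hd : (2*(j-1)+1)/2 = j-1 := by omega
    rw [h1, Nat.testBit_succ, hd]
  have hA2 : binExp (m+1) (2*j-1) (Fin.last m) = 1 := by
    simp [binExp, h2j, Nat.testBit_zero]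
  have hS : (∑ k, (α k).val * (binExp m (j-1) k).val) % 2 = ip α (binExp m (j-1)) := by
    have : ((∑ k, (α k).val * (binExp m (j-1) k).val : ℕ) : ZMod 2)
        = ∑ k, α k * binExp m (j-1) k := by
      push_cast
      refine Finset.sum_congr rfl fun k _ => ?_
      rw [ZMod.natCast_val, ZMod.natCast_val, ZMod.cast_id, ZMod.cast_id]
    rw [ip, ← this, ZMod.val_natCast]
  set S := ∑ k, (α k).val * (binExp m (j-1) k).val with hSdef
  have hip : ip α (binExp m (j-1)) = S % 2 := hS.symm
  constructor
  · rw [rmSeq, rmSeq, Fin.sum_univ_castSucc (n := m), ← pow_add]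
    rw [Fin.sum_univ_castSucc (f := fun k => ∑ l,
      (binExp (m+1) (2*j-1) k).val * (P k _).val * (binExp (m+1) (2*j-1) _).val)]
    simp only [Fin.sum_univ_castSucc (n := m), hA1, hA2, hQ, hα, hα', hβ, hb, hbm]
    apply Ipow_mod4
    simp only [ZMod.val_one, mul_one, one_mul, Finset.sum_add_distrib]
    have hc : (∑ x : Fin m, (binExp m (j-1) x).val * (α x).val) = S := by
      rw [hSdef]; exact Finset.sum_congr rfl fun k _ => (mul_comm _ _)
    rw [hc, hip, ← hSdef]
    omega
  · have h1 : 2 * bm.val + β.val + 2 * ip α (binExp m (j-1))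
      = 2 * (bm.val + ip α (binExp m (j-1))) + β.val := by ring
    rw [h1, pow_add, pow_mul, Complex.I_sq]
end

section
/- The map sending a pair (P, b), with P a symmetric m×m matrix over ℤ/2 and b ∈ (ℤ/2)^m, to the second-order Reed–Muller sequence (c_j)_{j=1}^{2^m} with c_j = i^{2 bᵀ a_{j-1} + a_{j-1}ᵀ P a_{j-1}} is injective. Consequently there are exactly 2^{m(m+3)/2} distinct second-order Reed–Muller sequences of length 2^m. -/
open Complex Finset

/-- The map `(P, b) ↦ (c_j)_{j=1}^{2^m}`, where `j : Fin (2^m)` stands for the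
0-based index `j - 1`. -/
noncomputable def rmMap (m : ℕ) :
    {P : Matrix (Fin m) (Fin m) (ZMod 2) // P.IsSymm} × (Fin m → ZMod 2)
      → (Fin (2 ^ m) → ℂ) :=
  fun pb j => rmSeq pb.1.1 pb.2 (j : ℕ)

-- ### Auxiliary lemmas

lemma testBit_two_pow_add' {a b c : ℕ} (hab : a ≠ b) :
    (2 ^ a + 2 ^ b).testBit c = (decide (c = a) || decide (c = b)) := by
  rcases eq_or_ne c a with rfl | hca
  · rw [Nat.testBit_two_pow_add_eq, Nat.testBit_two_pow_of_ne (Ne.symm hab)]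
    simp
  rcases eq_or_ne c b with rfl | hcb
  · rw [add_comm, Nat.testBit_two_pow_add_eq, Nat.testBit_two_pow_of_ne hab]
    simp
  · simp only [hca, hcb, decide_eq_false, Bool.or_false]
    rcases lt_or_ge c a with h | h
    · rw [Nat.testBit_two_pow_add_gt h, Nat.testBit_two_pow_of_ne (Ne.symm hcb)]; simp
    rcases lt_or_ge c b with h' | h'
    · rw [add_comm, Nat.testBit_two_pow_add_gt h', Nat.testBit_two_pow_of_ne (Ne.symm hca)]; simp
    · have ha : a < c := lt_of_le_of_ne h (Ne.symm hca)
      have hb : b < c := lt_of_le_of_ne h' (Ne.symm hcb)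
      apply Nat.testBit_lt_two_pow
      have h1 : 2 ^ a ≤ 2 ^ (c - 1) := Nat.pow_le_pow_right (by norm_num) (by omega)
      have h2 : 2 ^ b ≤ 2 ^ (c - 1) := Nat.pow_le_pow_right (by norm_num) (by omega)
      have h3 : 2 ^ (c - 1) + 2 ^ (c - 1) = 2 ^ c := by
        rw [← two_mul, ← pow_succ']; congr 1; omega
      have h4 : 2 ^ a ≠ 2 ^ b := fun h => hab (Nat.pow_right_injective (by norm_num) h)
      omega

lemma binExp_single {m : ℕ} (k₀ k : Fin m) :
    binExp m (2 ^ (m - 1 - (k₀ : ℕ))) k = if k = k₀ then 1 else 0 := by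
  unfold binExp
  rcases eq_or_ne k k₀ with rfl | hk
  · simp [Nat.testBit_two_pow_self]
  · have hne : m - 1 - (k₀ : ℕ) ≠ m - 1 - (k : ℕ) := by
      have := k.isLt; have := k₀.isLt
      intro h; exact hk (Fin.ext (by omega))
    simp [Nat.testBit_two_pow_of_ne hne, hk]

lemma binExp_pair {m : ℕ} (k₀ l₀ k : Fin m) (h : k₀ ≠ l₀) :
    binExp m (2 ^ (m - 1 - (k₀ : ℕ)) + 2 ^ (m - 1 - (l₀ : ℕ))) k
      = if k = k₀ ∨ k = l₀ then 1 else 0 := by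
  unfold binExp
  have hab : m - 1 - (k₀ : ℕ) ≠ m - 1 - (l₀ : ℕ) := by
    have := k₀.isLt; have := l₀.isLt
    intro hh; exact h (Fin.ext (by omega))
  rw [testBit_two_pow_add' hab]
  have e1 : (m - 1 - (k : ℕ) = m - 1 - (k₀ : ℕ)) ↔ k = k₀ := by
    have := k.isLt; have := k₀.isLt
    exact ⟨fun hh => Fin.ext (by omega), fun hh => by rw [hh]⟩
  have e2 : (m - 1 - (k : ℕ) = m - 1 - (l₀ : ℕ)) ↔ k = l₀ := by
    have := k.isLt; have := l₀.isLt
    exact ⟨fun hh => Fin.ext (by omega), fun hh => by rw [hh]⟩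
  simp [e1, e2]

lemma val_ite {p : Prop} [Decidable p] :
    (if p then (1 : ZMod 2) else 0).val = if p then 1 else 0 := by
  split_ifs <;> rfl

lemma exp_single {m : ℕ} (P : Matrix (Fin m) (Fin m) (ZMod 2)) (b : Fin m → ZMod 2)
    (k₀ : Fin m) :
    2 * ∑ k, (b k).val * (binExp m (2 ^ (m - 1 - (k₀ : ℕ))) k).val
      + ∑ k, ∑ l, (binExp m (2 ^ (m - 1 - (k₀ : ℕ))) k).val * (P k l).val
          * (binExp m (2 ^ (m - 1 - (k₀ : ℕ))) l).val
      = 2 * (b k₀).val + (P k₀ k₀).val := by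
  simp [binExp_single, val_ite, mul_ite, ite_mul, Finset.sum_ite_eq']

lemma exp_pair {m : ℕ} (P : Matrix (Fin m) (Fin m) (ZMod 2)) (b : Fin m → ZMod 2)
    (k₀ l₀ : Fin m) (h : k₀ ≠ l₀) :
    2 * ∑ k, (b k).val * (binExp m (2 ^ (m - 1 - (k₀ : ℕ)) + 2 ^ (m - 1 - (l₀ : ℕ))) k).val
      + ∑ k, ∑ l, (binExp m (2 ^ (m - 1 - (k₀ : ℕ)) + 2 ^ (m - 1 - (l₀ : ℕ))) k).val * (P k l).val
          * (binExp m (2 ^ (m - 1 - (k₀ : ℕ)) + 2 ^ (m - 1 - (l₀ : ℕ))) l).val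
      = 2 * ((b k₀).val + (b l₀).val)
        + ((P k₀ k₀).val + (P k₀ l₀).val + (P l₀ k₀).val + (P l₀ l₀).val) := by
  have split : ∀ k : Fin m,
      (binExp m (2 ^ (m - 1 - (k₀ : ℕ)) + 2 ^ (m - 1 - (l₀ : ℕ))) k).val
        = (if k = k₀ then 1 else 0) + (if k = l₀ then 1 else 0) := by
    intro k
    rw [binExp_pair _ _ _ h, val_ite]
    rcases eq_or_ne k k₀ with rfl | h1 <;> rcases eq_or_ne k l₀ with rfl | h2 <;>
      simp_all
  simp only [split, mul_add, add_mul, Finset.sum_add_distrib, mul_ite, ite_mul,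
    mul_one, mul_zero, one_mul, zero_mul, Finset.sum_ite_eq', Finset.mem_univ, if_true]
  ring

lemma I_pow_mod {a b : ℕ} (h : Complex.I ^ a = Complex.I ^ b) : a % 4 = b % 4 := by
  have key : ∀ n : ℕ, Complex.I ^ n = Complex.I ^ (n % 4) := fun n => by
    conv_lhs => rw [← Nat.div_add_mod n 4]
    rw [pow_add, pow_mul]
    norm_num [show Complex.I ^ 4 = 1 by norm_num [pow_succ, Complex.I_mul_I]]
  rw [key a, key b] at h
  have ha : a % 4 < 4 := Nat.mod_lt _ (by norm_num)
  have hb : b % 4 < 4 := Nat.mod_lt _ (by norm_num)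
  set x := a % 4; set y := b % 4
  interval_cases x <;> interval_cases y <;>
    first | rfl | (exfalso; revert h; norm_num [pow_succ, Complex.I_mul_I, Complex.ext_iff])

lemma rm_inj (m : ℕ) : Function.Injective (rmMap m) := by
  rintro ⟨⟨P, hP⟩, b⟩ ⟨⟨Q, hQ⟩, c⟩ h
  have key : ∀ n, n < 2 ^ m →
      (2 * ∑ k, (b k).val * (binExp m n k).val
        + ∑ k, ∑ l, (binExp m n k).val * (P k l).val * (binExp m n l).val) % 4
      = (2 * ∑ k, (c k).val * (binExp m n k).val
        + ∑ k, ∑ l, (binExp m n k).val * (Q k l).val * (binExp m n l).val) % 4 := by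
    intro n hn
    have h2 := congrFun h (⟨n, hn⟩ : Fin (2 ^ m))
    simp only [rmMap, rmSeq] at h2
    exact I_pow_mod h2
  have hlt : ∀ k₀ : Fin m, 2 ^ (m - 1 - (k₀ : ℕ)) < 2 ^ m := by
    intro k₀
    exact Nat.pow_lt_pow_right (by norm_num) (by have := k₀.isLt; omega)
  have hlt2 : ∀ k₀ l₀ : Fin m, k₀ ≠ l₀ →
      2 ^ (m - 1 - (k₀ : ℕ)) + 2 ^ (m - 1 - (l₀ : ℕ)) < 2 ^ m := by
    intro k₀ l₀ hne
    have h1 := k₀.isLt; have h2 := l₀.isLt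
    have hab : m - 1 - (k₀ : ℕ) ≠ m - 1 - (l₀ : ℕ) := fun hh => hne (Fin.ext (by omega))
    rcases lt_or_gt_of_ne hab with hh | hh
    · calc 2 ^ (m - 1 - (k₀ : ℕ)) + 2 ^ (m - 1 - (l₀ : ℕ))
          < 2 ^ (m - 1 - (l₀ : ℕ)) + 2 ^ (m - 1 - (l₀ : ℕ)) := by
            have := Nat.pow_lt_pow_right (show 1 < 2 by norm_num) hh; omega
        _ = 2 ^ (m - 1 - (l₀ : ℕ) + 1) := by rw [← two_mul, ← pow_succ']
        _ ≤ 2 ^ m := Nat.pow_le_pow_right (by norm_num) (by omega)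
    · calc 2 ^ (m - 1 - (k₀ : ℕ)) + 2 ^ (m - 1 - (l₀ : ℕ))
          < 2 ^ (m - 1 - (k₀ : ℕ)) + 2 ^ (m - 1 - (k₀ : ℕ)) := by
            have := Nat.pow_lt_pow_right (show 1 < 2 by norm_num) hh; omega
        _ = 2 ^ (m - 1 - (k₀ : ℕ) + 1) := by rw [← two_mul, ← pow_succ']
        _ ≤ 2 ^ m := Nat.pow_le_pow_right (by norm_num) (by omega)
  have stepA : ∀ k₀ : Fin m, (b k₀).val = (c k₀).val ∧ (P k₀ k₀).val = (Q k₀ k₀).val := by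
    intro k₀
    have hA := key _ (hlt k₀)
    rw [exp_single P b k₀, exp_single Q c k₀] at hA
    have b1 : (b k₀).val < 2 := ZMod.val_lt _
    have b2 : (c k₀).val < 2 := ZMod.val_lt _
    have b3 : (P k₀ k₀).val < 2 := ZMod.val_lt _
    have b4 : (Q k₀ k₀).val < 2 := ZMod.val_lt _
    omega
  have hbc : b = c := funext fun k₀ => ZMod.val_injective 2 (stepA k₀).1
  have hPQ : P = Q := by
    ext k₀ l₀
    rcases eq_or_ne k₀ l₀ with rfl | hne
    · exact ZMod.val_injective 2 (stepA k₀).2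
    · apply ZMod.val_injective 2
      have hB := key _ (hlt2 k₀ l₀ hne)
      rw [exp_pair P b k₀ l₀ hne, exp_pair Q c k₀ l₀ hne] at hB
      have s1 : (P l₀ k₀).val = (P k₀ l₀).val := by rw [hP.apply]
      have s2 : (Q l₀ k₀).val = (Q k₀ l₀).val := by rw [hQ.apply]
      have d1 := (stepA k₀).1; have d2 := (stepA l₀).1
      have d3 := (stepA k₀).2; have d4 := (stepA l₀).2
      have b1 : (P k₀ l₀).val < 2 := ZMod.val_lt _
      have b2 : (Q k₀ l₀).val < 2 := ZMod.val_lt _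
      have b3 : (b k₀).val < 2 := ZMod.val_lt _
      have b4 : (b l₀).val < 2 := ZMod.val_lt _
      have b5 : (P k₀ k₀).val < 2 := ZMod.val_lt _
      have b6 : (P l₀ l₀).val < 2 := ZMod.val_lt _
      omega
  simp [Prod.ext_iff, Subtype.ext_iff, hPQ, hbc]

/-- Symmetric matrices over `ZMod 2` correspond to functions on `Sym2`. -/
def symmEquiv (m : ℕ) :
    {P : Matrix (Fin m) (Fin m) (ZMod 2) // P.IsSymm} ≃ (Sym2 (Fin m) → ZMod 2) where
  toFun P := Sym2.lift ⟨fun i j => P.1 i j, fun i j => P.2.apply j i⟩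
  invFun f := ⟨Matrix.of fun i j => f s(i, j), by
    ext i j; simp [Matrix.transpose_apply, Sym2.eq_swap]⟩
  left_inv P := by ext i j; simp
  right_inv f := by funext x; induction x using Sym2.ind with | _ i j => simp

theorem stmt6 (m : ℕ) :
    Function.Injective (rmMap m) ∧
    Nat.card (Set.range (rmMap m)) = 2 ^ (m * (m + 3) / 2) := by
  refine ⟨rm_inj m, ?_⟩
  rw [Nat.card_range_of_injective (rm_inj m), Nat.card_eq_fintype_card, Fintype.card_prod,
    Fintype.card_congr (symmEquiv m), Fintype.card_fun, Fintype.card_fun]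
  simp only [ZMod.card, Sym2.card, Fintype.card_fin, Nat.choose_two_right]
  rw [← pow_add]
  congr 1
  obtain ⟨k, hk⟩ := Nat.even_mul_succ_self m
  have h2 : m * (m + 3) = m * (m + 1) + 2 * m := by ring
  have h3 : (m + 1) * (m + 1 - 1) = m * (m + 1) := by cases m <;> simp [Nat.mul_comm]
  rw [h3]
  set u := m * (m + 1); set v := m * (m + 3)
  omega
end

section
/- Let m ≥ 2 and let c^m be a second-order Reed–Muller sequence of length 2^m with parameters (P^m, b^m) decomposed as in Lemma 1. Define ỹ_j = c^m_{2j} · conj(c^m_{2j-1}) for 1 ≤ j ≤ 2^{m-1}. Then ỹ_j = i^{β} (-1)^{b_m + αᵀ a_{j-1}^{m-1}}; in particular, (ỹ_j)_{j} equals the constant i^β (-1)^{b_m} times the Walsh sequence with frequency α, and the Walsh–Hadamard transform of ỹ has a unique nonzero coefficient, located at index α with value 2^{m-1} i^{β} (-1)^{b_m}. -/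
open Complex Finset

lemma eps_add (x y : ZMod 2) : (-1:ℂ)^(x+y).val = (-1:ℂ)^x.val * (-1:ℂ)^y.val := by
  rw [ZMod.val_add, ← neg_one_pow_eq_pow_mod_two, pow_add]

lemma eps_natCast (n : ℕ) : (-1:ℂ)^((n : ZMod 2)).val = (-1:ℂ)^n := by
  rw [ZMod.val_natCast, ← neg_one_pow_eq_pow_mod_two]

lemma eps_sum {ι : Type*} (s : Finset ι) (f : ι → ZMod 2) :
    (-1:ℂ) ^ (∑ k ∈ s, f k).val = ∏ k ∈ s, (-1:ℂ) ^ (f k).val := by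
  induction s using Finset.cons_induction with
  | empty => simp
  | cons a s ha ih => rw [Finset.sum_cons, Finset.prod_cons, eps_add, ih]

lemma eps_sum_val {ι : Type*} (s : Finset ι) (f : ι → ZMod 2) :
    (-1:ℂ) ^ (∑ k ∈ s, (f k).val) = (-1:ℂ) ^ (∑ k ∈ s, f k).val := by
  rw [← eps_natCast (∑ k ∈ s, (f k).val)]
  congr 2
  push_cast [ZMod.natCast_val, ZMod.cast_id]
  rfl

lemma val_mul_two (x y : ZMod 2) : (x*y).val = x.val * y.val := by
  fin_cases x <;> fin_cases y <;> decide

lemma binExp_bij (m : ℕ) : Function.Bijective (fun j : Fin (2^m) => binExp m (j : ℕ)) := by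
  rw [Fintype.bijective_iff_injective_and_card]
  constructor
  · intro j j' h
    apply Fin.ext
    apply Nat.eq_of_testBit_eq
    intro i
    by_cases hi : i < m
    · have := congrFun h ⟨m - 1 - i, by omega⟩
      simp only [binExp] at this
      have hmi : m - 1 - (m - 1 - i) = i := by omega
      rw [hmi] at this
      by_cases h1 : Nat.testBit (j : ℕ) i <;> by_cases h2 : Nat.testBit (j' : ℕ) i <;>
        simp_all
    · rw [Nat.testBit_lt_two_pow
          (lt_of_lt_of_le j.isLt (Nat.pow_le_pow_right (by norm_num) (by omega))),
        Nat.testBit_lt_two_pow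
          (lt_of_lt_of_le j'.isLt (Nat.pow_le_pow_right (by norm_num) (by omega)))]
  · simp

lemma orth (m : ℕ) (γ : Fin m → ZMod 2) :
    ∑ v : Fin m → ZMod 2, ∏ k, (-1:ℂ)^((γ k * v k)).val
      = if γ = 0 then 2^m else 0 := by
  have huniv : (Finset.univ : Finset (ZMod 2)) = {0, 1} := by decide
  have key : ∀ x : ZMod 2, ∑ y : ZMod 2, (-1:ℂ)^((x * y)).val
      = if x = 0 then 2 else 0 := by
    intro x
    rw [huniv, Finset.sum_insert (by decide), Finset.sum_singleton]
    rcases (by decide : ∀ x : ZMod 2, x = 0 ∨ x = 1) x with rfl | rfl <;> simp [ZMod.val_one] <;> norm_num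
  have hps := Finset.prod_univ_sum (fun _ : Fin m => (Finset.univ : Finset (ZMod 2)))
      (fun k x => (-1:ℂ)^((γ k * x)).val)
  rw [Fintype.piFinset_univ] at hps
  rw [← hps]
  simp_rw [key]
  by_cases hγ : γ = 0
  · subst hγ; simp
  · obtain ⟨k, hk⟩ := Function.ne_iff.mp hγ
    rw [if_neg hγ]
    exact Finset.prod_eq_zero (Finset.mem_univ k) (by simpa using hk)

lemma binExp_two_mul_castSucc (m j : ℕ) (k : Fin m) :
    binExp (m+1) (2*j) (Fin.castSucc k) = binExp m j k := by
  simp only [binExp, Fin.coe_castSucc]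
  have h1 : m + 1 - 1 - (k:ℕ) = (m - 1 - (k:ℕ)) + 1 := by omega
  simp only [h1, Nat.testBit_add_one, Nat.mul_div_cancel_left _ (show 0<2 by norm_num)]

lemma binExp_two_mul_add_one_castSucc (m j : ℕ) (k : Fin m) :
    binExp (m+1) (2*j+1) (Fin.castSucc k) = binExp m j k := by
  simp only [binExp, Fin.coe_castSucc]
  have h1 : m + 1 - 1 - (k:ℕ) = (m - 1 - (k:ℕ)) + 1 := by omega
  have h2 : (2*j+1)/2 = j := by omega
  simp only [h1, Nat.testBit_add_one, h2]

lemma binExp_two_mul_last (m j : ℕ) :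
    binExp (m+1) (2*j) (Fin.last m) = 0 := by
  simp only [binExp, Fin.val_last]
  have : m + 1 - 1 - m = 0 := by omega
  simp only [this, Nat.testBit_zero]
  simp [Nat.mul_mod_right]

lemma binExp_two_mul_add_one_last (m j : ℕ) :
    binExp (m+1) (2*j+1) (Fin.last m) = 1 := by
  simp only [binExp, Fin.val_last]
  have : m + 1 - 1 - m = 0 := by omega
  simp only [this, Nat.testBit_zero]
  simp [Nat.mul_add_mod]

/-- The paper's `m` is `m + 1` here. For `j : Fin (2 ^ m)` standing for the 0-based
index `j - 1`, `ỹ_j = c^m_{2j} ⋅ conj(c^m_{2j-1})` is `rmSeq P b (2*j+1) * conj (rmSeq P b (2*j))`.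
It equals `i^β (-1)^{b_m + αᵀ a_{j-1}}`, and its Walsh–Hadamard transform has a unique
nonzero coefficient, at the index whose binary expansion is `α`, of value
`2^m ⋅ i^β ⋅ (-1)^{b_m}`. -/
theorem stmt19 (m : ℕ) (hm : 1 ≤ m)
    (P : Matrix (Fin (m + 1)) (Fin (m + 1)) (ZMod 2)) (hP : P.IsSymm)
    (Q : Matrix (Fin m) (Fin m) (ZMod 2)) (α : Fin m → ZMod 2) (β : ZMod 2)
    (hQ : ∀ k l : Fin m, P (Fin.castSucc k) (Fin.castSucc l) = Q k l)
    (hα : ∀ k : Fin m, P (Fin.castSucc k) (Fin.last m) = α k)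
    (hβ : P (Fin.last m) (Fin.last m) = β)
    (b : Fin (m + 1) → ZMod 2) (b' : Fin m → ZMod 2) (bm : ZMod 2)
    (hb : ∀ k : Fin m, b (Fin.castSucc k) = b' k) (hbm : b (Fin.last m) = bm)
    (ytil : Fin (2 ^ m) → ℂ)
    (hytil : ∀ j : Fin (2 ^ m),
      ytil j = rmSeq P b (2 * (j : ℕ) + 1) * (starRingEnd ℂ) (rmSeq P b (2 * (j : ℕ)))) :
    (∀ j : Fin (2 ^ m),
      ytil j = Complex.I ^ β.val
        * (-1 : ℂ) ^ (bm.val + ip α (binExp m (j : ℕ)))) ∧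
    (∀ l : Fin (2 ^ m),
      ∑ j : Fin (2 ^ m), (-1 : ℂ) ^ ip (binExp m (l : ℕ)) (binExp m (j : ℕ)) * ytil j
        = if binExp m (l : ℕ) = α then
            (2 : ℂ) ^ m * Complex.I ^ β.val * (-1 : ℂ) ^ bm.val
          else 0) := by
  have hα' : ∀ l : Fin m, P (Fin.last m) (Fin.castSucc l) = α l := by
    intro l
    have h := congrFun (congrFun hP (Fin.last m)) (Fin.castSucc l)
    rw [Matrix.transpose_apply] at h
    rw [← h, hα l]
  have key1 : ∀ j : ℕ,
      rmSeq P b (2*j+1) * (starRingEnd ℂ) (rmSeq P b (2*j))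
        = Complex.I ^ β.val * (-1:ℂ) ^ (bm.val + ip α (binExp m j)) := by
    intro j
    set e := binExp m j with he
    set S := ∑ k : Fin m, (α k).val * (e k).val with hS
    have L0 : ∑ k, (b k).val * (binExp (m+1) (2*j) k).val
        = ∑ k : Fin m, (b' k).val * (e k).val := by
      rw [Fin.sum_univ_castSucc]
      simp [binExp_two_mul_castSucc, binExp_two_mul_last, hb, ← he]
    have L1 : ∑ k, (b k).val * (binExp (m+1) (2*j+1) k).val
        = (∑ k : Fin m, (b' k).val * (e k).val) + bm.val := by
      rw [Fin.sum_univ_castSucc]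
      simp [binExp_two_mul_add_one_castSucc, binExp_two_mul_add_one_last, hb, hbm,
        ZMod.val_one, ← he]
    have Q0 : ∑ k, ∑ l, (binExp (m+1) (2*j) k).val * (P k l).val * (binExp (m+1) (2*j) l).val
        = ∑ k : Fin m, ∑ l : Fin m, (e k).val * (Q k l).val * (e l).val := by
      simp only [Fin.sum_univ_castSucc, binExp_two_mul_castSucc, binExp_two_mul_last,
        ZMod.val_zero, mul_zero, zero_mul, add_zero, hQ, Finset.sum_const_zero, ← he]
    have Q1 : ∑ k, ∑ l, (binExp (m+1) (2*j+1) k).val * (P k l).val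
          * (binExp (m+1) (2*j+1) l).val
        = (∑ k : Fin m, ∑ l : Fin m, (e k).val * (Q k l).val * (e l).val)
          + (2 * S + β.val) := by
      simp only [Fin.sum_univ_castSucc, binExp_two_mul_add_one_castSucc,
        binExp_two_mul_add_one_last, ZMod.val_one, mul_one, one_mul, hQ, hα, hα', hβ, ← he]
      rw [Finset.sum_add_distrib]
      have h1 : ∑ k : Fin m, (e k).val * (α k).val = S :=
        Finset.sum_congr rfl (fun k _ => mul_comm _ _)
      rw [h1, ← hS]
      ring
    have hs : 2 * (∑ k, (b k).val * (binExp (m+1) (2*j+1) k).val)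
          + ∑ k, ∑ l, (binExp (m+1) (2*j+1) k).val * (P k l).val
            * (binExp (m+1) (2*j+1) l).val
        = (2 * (∑ k, (b k).val * (binExp (m+1) (2*j) k).val)
          + ∑ k, ∑ l, (binExp (m+1) (2*j) k).val * (P k l).val
            * (binExp (m+1) (2*j) l).val)
          + (β.val + 2*(bm.val + S)) := by
      rw [L0, L1, Q0, Q1]; ring
    rw [rmSeq, rmSeq, hs, pow_add, map_pow, Complex.conj_I]
    have hI : Complex.I * -Complex.I = 1 := by
      rw [mul_neg, Complex.I_mul_I, neg_neg]
    rw [mul_right_comm, ← mul_pow, hI, one_pow, one_mul]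
    rw [pow_add, pow_mul, Complex.I_sq]
    congr 1
    rw [pow_add, pow_add]
    congr 1
    have hS' : S = ∑ k : Fin m, ((α k) * (e k)).val :=
      Finset.sum_congr rfl (fun k _ => (val_mul_two _ _).symm)
    rw [hS', eps_sum_val]
    rfl
  refine ⟨fun j => by rw [hytil j]; exact key1 (j : ℕ), ?_⟩
  intro l
  set lb := binExp m (l : ℕ) with hlb
  have step : ∀ j : Fin (2^m), (-1:ℂ)^(ip lb (binExp m (j:ℕ))) * ytil j
      = (Complex.I ^ β.val * (-1:ℂ)^bm.val)
        * ∏ k, (-1:ℂ)^(((fun k => lb k + α k) k * (binExp m (j:ℕ) k)).val) := by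
    intro j
    rw [hytil j, key1 (j : ℕ), pow_add]
    have h1 : (-1:ℂ)^(ip lb (binExp m (j:ℕ))) * (-1:ℂ)^(ip α (binExp m (j:ℕ)))
        = ∏ k, (-1:ℂ)^(((fun k => lb k + α k) k * (binExp m (j:ℕ) k)).val) := by
      unfold ip
      rw [← eps_add, ← Finset.sum_add_distrib]
      simp_rw [← add_mul]
      rw [eps_sum]
    rw [← h1]
    ring
  calc ∑ j : Fin (2^m), (-1:ℂ)^(ip lb (binExp m (j:ℕ))) * ytil j
      = ∑ j : Fin (2^m), (Complex.I ^ β.val * (-1:ℂ)^bm.val)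
        * ∏ k, (-1:ℂ)^(((fun k => lb k + α k) k * (binExp m (j:ℕ) k)).val) :=
        Finset.sum_congr rfl (fun j _ => step j)
    _ = (Complex.I ^ β.val * (-1:ℂ)^bm.val)
        * ∑ j : Fin (2^m), ∏ k, (-1:ℂ)^(((fun k => lb k + α k) k * (binExp m (j:ℕ) k)).val) := by
        rw [← Finset.mul_sum]
    _ = (Complex.I ^ β.val * (-1:ℂ)^bm.val)
        * ∑ v : Fin m → ZMod 2, ∏ k, (-1:ℂ)^(((fun k => lb k + α k) k * (v k)).val) := by
        congr 1
        exact Fintype.sum_bijective _ (binExp_bij m) _ _ (fun j => rfl)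
    _ = (Complex.I ^ β.val * (-1:ℂ)^bm.val)
        * (if (fun k => lb k + α k) = 0 then (2:ℂ)^m else 0) := by
        rw [orth m (fun k => lb k + α k)]
    _ = if lb = α then (2:ℂ)^m * Complex.I ^ β.val * (-1:ℂ)^bm.val else 0 := by
        have hcond : ((fun k => lb k + α k) = 0) ↔ lb = α := by
          have h2 : ∀ a c : ZMod 2, a + c = 0 ↔ a = c := by decide
          constructor
          · intro h; funext k; exact (h2 _ _).mp (congrFun h k)
          · intro h; funext k; exact (h2 _ _).mpr (congrFun h k)
        by_cases hc : lb = α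
        · rw [if_pos ((hcond).mpr hc), if_pos hc]; ring
        · rw [if_neg (fun h => hc (hcond.mp h)), if_neg hc, mul_zero]
end
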